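/- For any x ∈ ℝ^N with pairwise distinct coordinates, the sum over i from 1 to N of the product over j ≠ i of (x_i + 1 - x_j)/(x_i - x_j) equals N. -/
import Mathlib

open Polynomial Finset

/-- For any `x ∈ ℝ^N` with pairwise distinct coordinates, the sum over `i` of the
product over `j ≠ i` of `(x i + 1 - x j)/(x i - x j)` equals `N`. -/
theorem stmt_0 (N : ℕ) (hN : 1 ≤ N) (x : Fin N → ℝ) (hx : Function.Injective x) :
    ∑ i : Fin N, ∏ j ∈ Finset.univ.erase i, (x i + 1 - x j) / (x i - x j) = N := by
  classical
  have hx' : Set.InjOn x (Finset.univ : Finset (Fin N)) := fun a _ b _ h => hx h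
  set f : ℝ[X] := (∏ j : Fin N, (X - C (x j - 1))) - ∏ j : Fin N, (X - C (x j)) with hf
  have hcard : (Finset.univ : Finset (Fin N)).card = N := by simp
  have hNpos : 0 < N := hN
  -- degree f < N
  have hdeg : f.degree < (Finset.univ : Finset (Fin N)).card := by
    rw [hcard]
    have h1 : (∏ j : Fin N, (X - C (x j - 1))).Monic := monic_prod_of_monic _ _ fun j _ => monic_X_sub_C _
    have h2 : (∏ j : Fin N, (X - C (x j))).Monic := monic_prod_of_monic _ _ fun j _ => monic_X_sub_C _
    have hd1 : (∏ j : Fin N, (X - C (x j - 1))).degree = (N : WithBot ℕ) := by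
      rw [degree_prod]; simp only [degree_X_sub_C]; simp
    have hd2 : (∏ j : Fin N, (X - C (x j))).degree = (N : WithBot ℕ) := by
      rw [degree_prod]; simp only [degree_X_sub_C]; simp
    have := Polynomial.degree_sub_lt (hd1.trans hd2.symm) h1.ne_zero
      (by rw [h1.leadingCoeff, h2.leadingCoeff])
    rw [hd1] at this
    exact this
  -- eval at nodes
  have heval : ∀ i : Fin N, f.eval (x i) = ∏ j ∈ Finset.univ.erase i, (x i + 1 - x j) := by
    intro i
    have h2 : (∏ j : Fin N, (X - C (x j))).eval (x i) = 0 := by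
      rw [eval_prod]
      exact Finset.prod_eq_zero (Finset.mem_univ i) (by simp)
    rw [hf, eval_sub, h2, sub_zero, eval_prod]
    rw [← Finset.prod_erase_mul _ _ (Finset.mem_univ i)]
    simp only [eval_sub, eval_X, eval_C]
    rw [show x i - (x i - 1) = 1 by ring, mul_one]
    exact Finset.prod_congr rfl fun j _ => by ring
  -- coefficient N-1 of f is N
  have hcoeff : f.coeff (N - 1) = N := by
    rw [hf, coeff_sub]
    have c1 := Polynomial.prod_X_sub_C_coeff_card_pred (Finset.univ : Finset (Fin N))
      (fun j => x j - 1) (by simpa using hNpos)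
    have c2 := Polynomial.prod_X_sub_C_coeff_card_pred (Finset.univ : Finset (Fin N))
      (fun j => x j) (by simpa using hNpos)
    rw [hcard] at c1 c2
    rw [c1, c2]
    rw [Finset.sum_sub_distrib]
    simp
  -- f equals its interpolant
  have hinterp := Lagrange.eq_interpolate hx' hdeg
  -- coefficient of interpolant
  have hco : (Lagrange.interpolate Finset.univ x (fun i => f.eval (x i))).coeff (N - 1)
      = ∑ i : Fin N, f.eval (x i) * Lagrange.nodalWeight Finset.univ x i := by
    rw [Lagrange.interpolate_apply, finset_sum_coeff]
    refine Finset.sum_congr rfl fun i _ => ?_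
    rw [Lagrange.basis_eq_prod_sub_inv_mul_nodal_div (Finset.mem_univ i),
      ← Lagrange.nodal_erase_eq_nodal_div (Finset.mem_univ i)]
    rw [← mul_assoc, ← C_mul, coeff_C_mul]
    have hmon : (Lagrange.nodal ((Finset.univ : Finset (Fin N)).erase i) x).Monic :=
      Lagrange.nodal_monic
    have hnd : (Lagrange.nodal ((Finset.univ : Finset (Fin N)).erase i) x).natDegree = N - 1 := by
      rw [Lagrange.natDegree_nodal, Finset.card_erase_of_mem (Finset.mem_univ i), hcard]
    rw [← hnd, hmon.coeff_natDegree, mul_one]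
  -- finish
  have key : ∑ i : Fin N, f.eval (x i) * Lagrange.nodalWeight Finset.univ x i = N := by
    rw [← hco, ← hinterp, hcoeff]
  rw [← key]
  refine Finset.sum_congr rfl fun i _ => ?_
  rw [heval i, Lagrange.nodalWeight]
  simp [Finset.prod_div_distrib, div_eq_mul_inv, Finset.prod_inv_distrib, Finset.prod_mul_distrib]
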